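/- (Preservation of symmetric convex order under polar transforms) Let W and V be B-DMCs with finite output alphabets such that for every convex symmetric function f : [-1,1] → ℝ, Σ_y q_V(y) f(Δ_V(y)) ≤ Σ_y q_W(y) f(Δ_W(y)). Then the same inequality holds for the pairs (V⁻, W⁻) and (V⁺, W⁺). -/

import Mathlib

open Set Finset

/-- Normalized difference of transition probabilities (Δ-parameter);
by Lean's convention, division by zero yields 0. -/
noncomputable def delta {𝒴 : Type*} (W : Bool → 𝒴 → ℝ) (y : 𝒴) : ℝ :=
  (W false y - W true y) / (W false y + W true y)

/-- Output distribution under uniform input. -/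
noncomputable def qCh {𝒴 : Type*} (W : Bool → 𝒴 → ℝ) (y : 𝒴) : ℝ :=
  (W false y + W true y) / 2

/-- Arıkan's minus polar transform. -/
noncomputable def polarMinus {𝒴 : Type*} [Fintype 𝒴] (W : Bool → 𝒴 → ℝ) :
    Bool → 𝒴 × 𝒴 → ℝ :=
  fun u₁ p => ∑ u₂ : Bool, (1 / 2 : ℝ) * W (xor u₁ u₂) p.1 * W u₂ p.2

/-- Arıkan's plus polar transform. -/
noncomputable def polarPlus {𝒴 : Type*} (W : Bool → 𝒴 → ℝ) :
    Bool → 𝒴 × 𝒴 × Bool → ℝ :=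
  fun u₂ p => (1 / 2 : ℝ) * W (xor p.2.2 u₂) p.1 * W u₂ p.2.1

/-! ### Auxiliary lemmas -/

lemma aux_mul_mem_Icc {s t : ℝ} (hs : s ∈ Icc (-1:ℝ) 1) (ht : t ∈ Icc (-1:ℝ) 1) :
    s * t ∈ Icc (-1:ℝ) 1 := by
  obtain ⟨h1,h2⟩ := hs; obtain ⟨h3,h4⟩ := ht
  constructor <;> nlinarith

lemma frac_mem_Icc {s t : ℝ} (hs : s ∈ Icc (-1:ℝ) 1) (ht : t ∈ Icc (-1:ℝ) 1) :
    (s + t) / (1 + s * t) ∈ Icc (-1:ℝ) 1 := by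
  obtain ⟨h1,h2⟩ := hs; obtain ⟨h3,h4⟩ := ht
  have hd : 0 ≤ 1 + s * t := by nlinarith
  rcases eq_or_lt_of_le hd with h0 | h0
  · rw [← h0, div_zero]; constructor <;> norm_num
  · constructor
    · rw [le_div_iff₀ h0]; nlinarith
    · rw [div_le_one h0]; nlinarith

lemma convexOn_neg_comp {f : ℝ → ℝ} (hf : ConvexOn ℝ (Icc (-1:ℝ) 1) f) :
    ConvexOn ℝ (Icc (-1:ℝ) 1) (fun s => f (-s)) := by
  refine ⟨convex_Icc _ _, ?_⟩
  intro x hx y hy a b ha hb hab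
  have hx' : -x ∈ Icc (-1:ℝ) 1 := ⟨by linarith [hx.2], by linarith [hx.1]⟩
  have hy' : -y ∈ Icc (-1:ℝ) 1 := ⟨by linarith [hy.2], by linarith [hy.1]⟩
  have := hf.2 hx' hy' ha hb hab
  simp only [smul_eq_mul] at this ⊢
  rw [show -(a*x+b*y) = a*(-x)+b*(-y) by ring]
  exact this

lemma mul_comp_convex {f : ℝ → ℝ} (hf : ConvexOn ℝ (Icc (-1:ℝ) 1) f)
    {t : ℝ} (ht : t ∈ Icc (-1:ℝ) 1) :
    ConvexOn ℝ (Icc (-1:ℝ) 1) (fun s => f (s * t)) := by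
  refine ⟨convex_Icc _ _, ?_⟩
  intro x hx y hy a b ha hb hab
  have := hf.2 (aux_mul_mem_Icc hx ht) (aux_mul_mem_Icc hy ht) ha hb hab
  simp only [smul_eq_mul] at this ⊢
  rw [show (a*x+b*y)*t = a*(x*t)+b*(y*t) by ring]
  exact this

lemma perspective_convex {f : ℝ → ℝ} (hf : ConvexOn ℝ (Icc (-1:ℝ) 1) f)
    {t : ℝ} (ht : t ∈ Icc (-1:ℝ) 1) :
    ConvexOn ℝ (Icc (-1:ℝ) 1) (fun s => (1 + s * t) * f ((s + t) / (1 + s * t))) := by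
  refine ⟨convex_Icc _ _, ?_⟩
  intro s₁ hs₁ s₂ hs₂ a b ha hb hab
  simp only [smul_eq_mul]
  set p₁ := 1 + s₁ * t with hp₁def
  set p₂ := 1 + s₂ * t with hp₂def
  set p := 1 + (a * s₁ + b * s₂) * t with hpdef
  have hp₁ : 0 ≤ p₁ := by obtain ⟨u1,u2⟩ := hs₁; obtain ⟨v1,v2⟩ := ht; nlinarith
  have hp₂ : 0 ≤ p₂ := by obtain ⟨u1,u2⟩ := hs₂; obtain ⟨v1,v2⟩ := ht; nlinarith
  have hp : p = a * p₁ + b * p₂ := by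
    rw [hpdef, hp₁def, hp₂def]; linear_combination -hab
  set x₁ := (s₁ + t) / p₁ with hx₁def
  set x₂ := (s₂ + t) / p₂ with hx₂def
  have hx₁ : x₁ ∈ Icc (-1:ℝ) 1 := frac_mem_Icc hs₁ ht
  have hx₂ : x₂ ∈ Icc (-1:ℝ) 1 := frac_mem_Icc hs₂ ht
  have hk₁ : p₁ * x₁ = s₁ + t := by
    rcases eq_or_ne p₁ 0 with h | h
    · have hsq : (s₁ + t)^2 ≤ 0 := by
        obtain ⟨u1,u2⟩ := hs₁; obtain ⟨v1,v2⟩ := ht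
        nlinarith [h.symm.trans hp₁def]
      have : s₁ + t = 0 := by nlinarith [sq_nonneg (s₁ + t)]
      rw [h, zero_mul, this]
    · rw [hx₁def, mul_div_cancel₀ _ h]
  have hk₂ : p₂ * x₂ = s₂ + t := by
    rcases eq_or_ne p₂ 0 with h | h
    · have hsq : (s₂ + t)^2 ≤ 0 := by
        obtain ⟨u1,u2⟩ := hs₂; obtain ⟨v1,v2⟩ := ht
        nlinarith [h.symm.trans hp₂def]
      have : s₂ + t = 0 := by nlinarith [sq_nonneg (s₂ + t)]
      rw [h, zero_mul, this]
    · rw [hx₂def, mul_div_cancel₀ _ h]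
  rcases eq_or_lt_of_le (by rw [hp]; positivity : (0:ℝ) ≤ p) with h0 | h0
  · -- p = 0
    have hap : a * p₁ = 0 ∧ b * p₂ = 0 := by
      constructor <;> nlinarith [mul_nonneg ha hp₁, mul_nonneg hb hp₂]
    rw [← h0, zero_mul,
      show a * (p₁ * f x₁) = a * p₁ * f x₁ by ring,
      show b * (p₂ * f x₂) = b * p₂ * f x₂ by ring, hap.1, hap.2]
    norm_num
  · -- p > 0
    have hpne : p ≠ 0 := ne_of_gt h0
    have hw₁ : 0 ≤ a * p₁ / p := by positivity
    have hw₂ : 0 ≤ b * p₂ / p := by positivity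
    have hwsum : a * p₁ / p + b * p₂ / p = 1 := by
      rw [← add_div, ← hp, div_self hpne]
    have hcomb := hf.2 hx₁ hx₂ hw₁ hw₂ hwsum
    simp only [smul_eq_mul] at hcomb
    have harg : a * p₁ / p * x₁ + b * p₂ / p * x₂ = (a * s₁ + b * s₂ + t) / p := by
      rw [div_mul_eq_mul_div, div_mul_eq_mul_div, ← add_div]
      congr 1
      rw [mul_assoc, mul_assoc, hk₁, hk₂]
      linear_combination t * hab
    rw [harg] at hcomb
    have := mul_le_mul_of_nonneg_left hcomb (le_of_lt h0)
    calc p * f ((a * s₁ + b * s₂ + t) / p)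
        ≤ p * (a * p₁ / p * f x₁ + b * p₂ / p * f x₂) := this
      _ = a * (p₁ * f x₁) + b * (p₂ * f x₂) := by field_simp

noncomputable def gfun (f : ℝ → ℝ) (s t : ℝ) : ℝ :=
  (1 + s * t) / 2 * f ((s + t) / (1 + s * t)) + (1 - s * t) / 2 * f ((t - s) / (1 - s * t))

lemma gfun_convex {f : ℝ → ℝ} (hf : ConvexOn ℝ (Icc (-1:ℝ) 1) f)
    {t : ℝ} (ht : t ∈ Icc (-1:ℝ) 1) :
    ConvexOn ℝ (Icc (-1:ℝ) 1) (fun s => gfun f s t) := by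
  have h1 := (perspective_convex hf ht).smul (by norm_num : (0:ℝ) ≤ 1/2)
  have h2 := (convexOn_neg_comp (perspective_convex hf ht)).smul (by norm_num : (0:ℝ) ≤ 1/2)
  have h3 := h1.add h2
  refine h3.congr fun s _ => ?_
  unfold gfun
  simp only [Pi.add_apply, Pi.smul_apply, smul_eq_mul]
  ring_nf

lemma gfun_symm (f : ℝ → ℝ) (s t : ℝ) : gfun f s t = gfun f (-s) t := by
  unfold gfun
  ring_nf

lemma gfun_swap {f : ℝ → ℝ} (hsym : ∀ x ∈ Icc (-1:ℝ) 1, f x = f (-x))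
    {s t : ℝ} (hs : s ∈ Icc (-1:ℝ) 1) (ht : t ∈ Icc (-1:ℝ) 1) :
    gfun f s t = gfun f t s := by
  unfold gfun
  have hmem : (t - s) / (1 - s * t) ∈ Icc (-1:ℝ) 1 := by
    have hs' : -s ∈ Icc (-1:ℝ) 1 := ⟨by linarith [hs.2], by linarith [hs.1]⟩
    have := frac_mem_Icc hs' ht
    have e : (-s + t) / (1 + -s * t) = (t - s) / (1 - s * t) := by ring_nf
    rwa [e] at this
  have h2 : f ((s - t) / (1 - s * t)) = f ((t - s) / (1 - s * t)) := by
    rw [hsym _ hmem]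
    congr 1
    ring
  rw [show (1:ℝ) + t * s = 1 + s * t by ring, show (1:ℝ) - t * s = 1 - s * t by ring,
    show t + s = s + t by ring, h2]

lemma delta_mem_Icc {𝒴 : Type*} {W : Bool → 𝒴 → ℝ} (h : ∀ x y, 0 ≤ W x y) (y : 𝒴) :
    delta W y ∈ Icc (-1:ℝ) 1 := by
  unfold delta
  have ha := h false y; have hb := h true y
  rcases eq_or_lt_of_le (add_nonneg ha hb) with h0 | h0
  · rw [← h0, div_zero]; constructor <;> norm_num
  · constructor
    · rw [le_div_iff₀ h0]; linarith
    · rw [div_le_one h0]; linarith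

lemma qCh_nonneg {𝒴 : Type*} {W : Bool → 𝒴 → ℝ} (h : ∀ x y, 0 ≤ W x y) (y : 𝒴) :
    0 ≤ qCh W y := by
  unfold qCh; have := h false y; have := h true y; linarith

lemma main_step {𝒴 𝒵 : Type*} [Fintype 𝒴] [Fintype 𝒵]
    {W : Bool → 𝒴 → ℝ} {V : Bool → 𝒵 → ℝ}
    (hWnonneg : ∀ x y, 0 ≤ W x y) (hVnonneg : ∀ x z, 0 ≤ V x z)
    (hord : ∀ f : ℝ → ℝ, ConvexOn ℝ (Icc (-1 : ℝ) 1) f →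
      (∀ x ∈ Icc (-1 : ℝ) 1, f x = f (-x)) →
      ∑ z, qCh V z * f (delta V z) ≤ ∑ y, qCh W y * f (delta W y))
    (g : ℝ → ℝ → ℝ)
    (hconv : ∀ t ∈ Icc (-1:ℝ) 1, ConvexOn ℝ (Icc (-1:ℝ) 1) (fun s => g s t))
    (hsymm : ∀ t ∈ Icc (-1:ℝ) 1, ∀ s ∈ Icc (-1:ℝ) 1, g s t = g (-s) t)
    (hswap : ∀ s ∈ Icc (-1:ℝ) 1, ∀ t ∈ Icc (-1:ℝ) 1, g s t = g t s) :
    ∑ z₁, ∑ z₂, qCh V z₁ * qCh V z₂ * g (delta V z₁) (delta V z₂)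
      ≤ ∑ y₁, ∑ y₂, qCh W y₁ * qCh W y₂ * g (delta W y₁) (delta W y₂) := by
  have hstep : ∀ t ∈ Icc (-1:ℝ) 1,
      ∑ z, qCh V z * g (delta V z) t ≤ ∑ y, qCh W y * g (delta W y) t := by
    intro t ht
    exact hord (fun s => g s t) (hconv t ht) (fun x hx => hsymm t ht x hx)
  calc ∑ z₁, ∑ z₂, qCh V z₁ * qCh V z₂ * g (delta V z₁) (delta V z₂)
      = ∑ z₁, qCh V z₁ * ∑ z₂, qCh V z₂ * g (delta V z₂) (delta V z₁) := by
        refine Finset.sum_congr rfl fun z₁ _ => ?_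
        rw [Finset.mul_sum]
        refine Finset.sum_congr rfl fun z₂ _ => ?_
        rw [hswap _ (delta_mem_Icc hVnonneg z₁) _ (delta_mem_Icc hVnonneg z₂)]
        ring
    _ ≤ ∑ z₁, qCh V z₁ * ∑ y₂, qCh W y₂ * g (delta W y₂) (delta V z₁) := by
        refine Finset.sum_le_sum fun z₁ _ => ?_
        exact mul_le_mul_of_nonneg_left (hstep _ (delta_mem_Icc hVnonneg z₁))
          (qCh_nonneg hVnonneg z₁)
    _ = ∑ y₂, qCh W y₂ * ∑ z₁, qCh V z₁ * g (delta V z₁) (delta W y₂) := by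
        simp only [Finset.mul_sum]
        rw [Finset.sum_comm]
        refine Finset.sum_congr rfl fun y₂ _ => Finset.sum_congr rfl fun z₁ _ => ?_
        rw [hswap _ (delta_mem_Icc hWnonneg y₂) _ (delta_mem_Icc hVnonneg z₁)]
        ring
    _ ≤ ∑ y₂, qCh W y₂ * ∑ y₁, qCh W y₁ * g (delta W y₁) (delta W y₂) := by
        refine Finset.sum_le_sum fun y₂ _ => ?_
        exact mul_le_mul_of_nonneg_left (hstep _ (delta_mem_Icc hWnonneg y₂))
          (qCh_nonneg hWnonneg y₂)
    _ = ∑ y₁, ∑ y₂, qCh W y₁ * qCh W y₂ * g (delta W y₁) (delta W y₂) := by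
        simp only [Finset.mul_sum]
        rw [Finset.sum_comm]
        refine Finset.sum_congr rfl fun y₁ _ => Finset.sum_congr rfl fun y₂ _ => ?_
        ring

lemma plus_branch (f : ℝ → ℝ) {a₁ b₁ a₂ b₂ : ℝ}
    (ha₁ : 0 ≤ a₁) (hb₁ : 0 ≤ b₁) (ha₂ : 0 ≤ a₂) (hb₂ : 0 ≤ b₂) :
    (1/2*a₁*a₂ + 1/2*b₁*b₂)/2 * f ((1/2*a₁*a₂ - 1/2*b₁*b₂)/(1/2*a₁*a₂ + 1/2*b₁*b₂))
    = (a₁+b₁)/2 * ((a₂+b₂)/2) *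
      ((1 + (a₁-b₁)/(a₁+b₁) * ((a₂-b₂)/(a₂+b₂)))/2 *
        f (((a₁-b₁)/(a₁+b₁) + (a₂-b₂)/(a₂+b₂))/(1 + (a₁-b₁)/(a₁+b₁) * ((a₂-b₂)/(a₂+b₂))))) := by
  rcases eq_or_lt_of_le (add_nonneg ha₁ hb₁) with hs₁ | hs₁
  · have h1 : a₁ = 0 := by nlinarith
    have h2 : b₁ = 0 := by nlinarith
    subst h1; subst h2; norm_num
  rcases eq_or_lt_of_le (add_nonneg ha₂ hb₂) with hs₂ | hs₂
  · have h1 : a₂ = 0 := by nlinarith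
    have h2 : b₂ = 0 := by nlinarith
    subst h1; subst h2; norm_num
  have hs₁' : a₁ + b₁ ≠ 0 := ne_of_gt hs₁
  have hs₂' : a₂ + b₂ ≠ 0 := ne_of_gt hs₂
  rcases eq_or_ne (a₁*a₂ + b₁*b₂) 0 with hY | hY
  · have hL : 1/2*a₁*a₂ + 1/2*b₁*b₂ = 0 := by linarith
    have h1 : 1 + (a₁-b₁)/(a₁+b₁) * ((a₂-b₂)/(a₂+b₂)) = 0 := by
      field_simp
      linear_combination 2 * hY
    rw [hL, h1]
    simp
  · have hY' : 1/2*a₁*a₂ + 1/2*b₁*b₂ ≠ 0 := by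
      intro h; exact hY (by linarith)
    have hD : 1 + (a₁-b₁)/(a₁+b₁) * ((a₂-b₂)/(a₂+b₂)) ≠ 0 := by
      intro h
      apply hY
      field_simp at h
      linarith
    have hcoeff : (1/2*a₁*a₂ + 1/2*b₁*b₂)/2
        = (a₁+b₁)/2 * ((a₂+b₂)/2) * ((1 + (a₁-b₁)/(a₁+b₁) * ((a₂-b₂)/(a₂+b₂)))/2) := by
      field_simp
      ring
    have harg : (1/2*a₁*a₂ - 1/2*b₁*b₂)/(1/2*a₁*a₂ + 1/2*b₁*b₂)
        = ((a₁-b₁)/(a₁+b₁) + (a₂-b₂)/(a₂+b₂))/(1 + (a₁-b₁)/(a₁+b₁) * ((a₂-b₂)/(a₂+b₂))) := by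
      rw [div_eq_div_iff hY' hD]
      field_simp
      ring
    rw [hcoeff, harg]
    ring

lemma minus_point {𝒴 : Type*} [Fintype 𝒴] (f : ℝ → ℝ) (W : Bool → 𝒴 → ℝ) (y₁ y₂ : 𝒴) :
    qCh (polarMinus W) (y₁, y₂) * f (delta (polarMinus W) (y₁, y₂))
    = qCh W y₁ * qCh W y₂ * f (delta W y₁ * delta W y₂) := by
  have harg : delta (polarMinus W) (y₁, y₂) = delta W y₁ * delta W y₂ := by
    simp only [delta, polarMinus, Fintype.sum_bool]
    rw [div_mul_div_comm]
    rw [show (W false y₁ - W true y₁) * (W false y₂ - W true y₂)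
        = ((1/2 : ℝ) * W (xor false false) y₁ * W false y₂ + 1/2 * W (xor false true) y₁ * W true y₂
          - (1/2 * W (xor true false) y₁ * W false y₂ + 1/2 * W (xor true true) y₁ * W true y₂)) * 2 by
      simp; ring]
    rw [show (W false y₁ + W true y₁) * (W false y₂ + W true y₂)
        = ((1/2 : ℝ) * W (xor false false) y₁ * W false y₂ + 1/2 * W (xor false true) y₁ * W true y₂
          + (1/2 * W (xor true false) y₁ * W false y₂ + 1/2 * W (xor true true) y₁ * W true y₂)) * 2 by
      simp; ring]
    rw [mul_div_mul_right _ _ (two_ne_zero)]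
    simp only [Bool.bne_false, Bool.bne_true, Bool.xor_false, Bool.xor_true]
    ring_nf
  have hq : qCh (polarMinus W) (y₁, y₂) = qCh W y₁ * qCh W y₂ := by
    simp only [qCh, polarMinus, Fintype.sum_bool]
    simp
    ring
  rw [harg, hq]

lemma plus_point {𝒴 : Type*} (f : ℝ → ℝ) (W : Bool → 𝒴 → ℝ)
    (hW : ∀ x y, 0 ≤ W x y) (y₁ y₂ : 𝒴) :
    (∑ u : Bool, qCh (polarPlus W) (y₁, y₂, u) * f (delta (polarPlus W) (y₁, y₂, u)))
    = qCh W y₁ * qCh W y₂ * gfun f (delta W y₁) (delta W y₂) := by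
  rw [Fintype.sum_bool]
  simp only [qCh, delta, polarPlus, gfun]
  simp only [Bool.bne_false, Bool.bne_true, Bool.xor_false, Bool.xor_true]
  have h1 := plus_branch f (hW false y₁) (hW true y₁) (hW false y₂) (hW true y₂)
  have h2 := plus_branch f (hW true y₁) (hW false y₁) (hW false y₂) (hW true y₂)
  set a₁ := W false y₁; set b₁ := W true y₁; set a₂ := W false y₂; set b₂ := W true y₂
  calc (1/2*b₁*a₂ + 1/2*a₁*b₂)/2 * f ((1/2*b₁*a₂ - 1/2*a₁*b₂)/(1/2*b₁*a₂ + 1/2*a₁*b₂))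
        + (1/2*a₁*a₂ + 1/2*b₁*b₂)/2 * f ((1/2*a₁*a₂ - 1/2*b₁*b₂)/(1/2*a₁*a₂ + 1/2*b₁*b₂))
      = (b₁+a₁)/2 * ((a₂+b₂)/2) *
          ((1 + (b₁-a₁)/(b₁+a₁) * ((a₂-b₂)/(a₂+b₂)))/2 *
            f (((b₁-a₁)/(b₁+a₁) + (a₂-b₂)/(a₂+b₂))/(1 + (b₁-a₁)/(b₁+a₁) * ((a₂-b₂)/(a₂+b₂)))))
        + (a₁+b₁)/2 * ((a₂+b₂)/2) *
          ((1 + (a₁-b₁)/(a₁+b₁) * ((a₂-b₂)/(a₂+b₂)))/2 *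
            f (((a₁-b₁)/(a₁+b₁) + (a₂-b₂)/(a₂+b₂))/(1 + (a₁-b₁)/(a₁+b₁) * ((a₂-b₂)/(a₂+b₂))))) := by
        rw [h1, h2]
    _ = (a₁+b₁)/2 * ((a₂+b₂)/2) *
          ((1 + (a₁-b₁)/(a₁+b₁) * ((a₂-b₂)/(a₂+b₂)))/2 *
            f (((a₁-b₁)/(a₁+b₁) + (a₂-b₂)/(a₂+b₂))/(1 + (a₁-b₁)/(a₁+b₁) * ((a₂-b₂)/(a₂+b₂))))
          + (1 - (a₁-b₁)/(a₁+b₁) * ((a₂-b₂)/(a₂+b₂)))/2 *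
            f (((a₂-b₂)/(a₂+b₂) - (a₁-b₁)/(a₁+b₁))/(1 - (a₁-b₁)/(a₁+b₁) * ((a₂-b₂)/(a₂+b₂))))) := by
        have e1 : (b₁-a₁)/(b₁+a₁) = -((a₁-b₁)/(a₁+b₁)) := by
          rw [show b₁+a₁ = a₁+b₁ by ring, show b₁-a₁ = -(a₁-b₁) by ring, neg_div]
        rw [e1]
        ring_nf

theorem polar_preserves_symmetric_convex_order
    {𝒴 𝒵 : Type*} [Fintype 𝒴] [Fintype 𝒵]
    (W : Bool → 𝒴 → ℝ) (V : Bool → 𝒵 → ℝ)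
    (hWnonneg : ∀ x y, 0 ≤ W x y) (hVnonneg : ∀ x z, 0 ≤ V x z)
    (hWsum : ∀ x, ∑ y, W x y = 1) (hVsum : ∀ x, ∑ z, V x z = 1)
    (hord : ∀ f : ℝ → ℝ, ConvexOn ℝ (Icc (-1 : ℝ) 1) f →
      (∀ x ∈ Icc (-1 : ℝ) 1, f x = f (-x)) →
      ∑ z, qCh V z * f (delta V z) ≤ ∑ y, qCh W y * f (delta W y)) :
    (∀ f : ℝ → ℝ, ConvexOn ℝ (Icc (-1 : ℝ) 1) f →
      (∀ x ∈ Icc (-1 : ℝ) 1, f x = f (-x)) →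
      ∑ z, qCh (polarMinus V) z * f (delta (polarMinus V) z)
        ≤ ∑ y, qCh (polarMinus W) y * f (delta (polarMinus W) y)) ∧
    (∀ f : ℝ → ℝ, ConvexOn ℝ (Icc (-1 : ℝ) 1) f →
      (∀ x ∈ Icc (-1 : ℝ) 1, f x = f (-x)) →
      ∑ z, qCh (polarPlus V) z * f (delta (polarPlus V) z)
        ≤ ∑ y, qCh (polarPlus W) y * f (delta (polarPlus W) y)) := by
  constructor
  · intro f hconv hsym
    have key := main_step hWnonneg hVnonneg hord (fun s t => f (s * t))
      (fun t ht => mul_comp_convex hconv ht)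
      (fun t ht s hs => by
        rw [hsym (s * t) (aux_mul_mem_Icc hs ht), neg_mul])
      (fun s hs t ht => by simp only [mul_comm])
    calc ∑ z, qCh (polarMinus V) z * f (delta (polarMinus V) z)
        = ∑ z₁, ∑ z₂, qCh V z₁ * qCh V z₂ * f (delta V z₁ * delta V z₂) := by
          rw [Fintype.sum_prod_type]
          exact Finset.sum_congr rfl fun z₁ _ => Finset.sum_congr rfl fun z₂ _ =>
            minus_point f V z₁ z₂
      _ ≤ ∑ y₁, ∑ y₂, qCh W y₁ * qCh W y₂ * f (delta W y₁ * delta W y₂) := key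
      _ = ∑ y, qCh (polarMinus W) y * f (delta (polarMinus W) y) := by
          rw [Fintype.sum_prod_type]
          exact Finset.sum_congr rfl fun y₁ _ => Finset.sum_congr rfl fun y₂ _ =>
            (minus_point f W y₁ y₂).symm
  · intro f hconv hsym
    have key := main_step hWnonneg hVnonneg hord (gfun f)
      (fun t ht => gfun_convex hconv ht)
      (fun t ht s hs => gfun_symm f s t)
      (fun s hs t ht => gfun_swap hsym hs ht)
    calc ∑ z, qCh (polarPlus V) z * f (delta (polarPlus V) z)
        = ∑ z₁, ∑ z₂, qCh V z₁ * qCh V z₂ * gfun f (delta V z₁) (delta V z₂) := by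
          rw [Fintype.sum_prod_type]
          refine Finset.sum_congr rfl fun z₁ _ => ?_
          rw [Fintype.sum_prod_type]
          exact Finset.sum_congr rfl fun z₂ _ => plus_point f V hVnonneg z₁ z₂
      _ ≤ ∑ y₁, ∑ y₂, qCh W y₁ * qCh W y₂ * gfun f (delta W y₁) (delta W y₂) := key
      _ = ∑ y, qCh (polarPlus W) y * f (delta (polarPlus W) y) := by
          rw [Fintype.sum_prod_type]
          refine Finset.sum_congr rfl fun y₁ _ => ?_
          rw [Fintype.sum_prod_type]
          exact Finset.sum_congr rfl fun y₂ _ => (plus_point f W hWnonneg y₁ y₂).symm
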